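/- Let V be a finite set and r : (pairs of distinct elements of V) → ℤ_{≥0} a symmetric function on pairs. Define R : 2^V → ℤ_{≥0} by R(X) = max{r({u,v}) : u ∈ X, v ∈ V \ X} for nonempty proper X ⊊ V, and R(∅) = R(V) = 0. Then R is symmetric and skew-supermodular. -/
import Mathlib


/-- `R(X) = max { r(u,v) : u ∈ X, v ∉ X }`, with `R(∅) = R(V) = 0`
(the `Finset.sup` over an empty index set is `0`). -/
def maxDemand {V : Type*} [Fintype V] [DecidableEq V] (r : V → V → ℕ)
    (X : Finset V) : ℕ :=
  (X ×ˢ Xᶜ).sup fun uv => r uv.1 uv.2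

/-- If `u ∈ X` and `v ∉ X`, then `r u v ≤ maxDemand r X`. -/
lemma le_maxDemand {V : Type*} [Fintype V] [DecidableEq V] (r : V → V → ℕ)
    {u v : V} {X : Finset V} (h1 : u ∈ X) (h2 : v ∉ X) : r u v ≤ maxDemand r X := by
  have hm : (u, v) ∈ X ×ˢ Xᶜ := Finset.mem_product.mpr ⟨h1, Finset.mem_compl.mpr h2⟩
  exact Finset.le_sup (f := fun uv : V × V => r uv.1 uv.2) hm

/-- If `v ∈ X` and `u ∉ X`, then `r u v ≤ maxDemand r X` (using symmetry of `r`). -/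
lemma le_maxDemand' {V : Type*} [Fintype V] [DecidableEq V] (r : V → V → ℕ)
    (hr : ∀ u v : V, r u v = r v u) {u v : V} {X : Finset V}
    (h1 : v ∈ X) (h2 : u ∉ X) : r u v ≤ maxDemand r X :=
  (hr u v).le.trans (le_maxDemand r h1 h2)

/-- For a symmetric demand function `r` on pairs, the function `R` is symmetric and
skew-supermodular. -/
theorem maxDemand_symmetric_skewSupermodular {V : Type*} [Fintype V] [DecidableEq V]
    (r : V → V → ℕ) (hr : ∀ u v : V, r u v = r v u) :
    (∀ X : Finset V, maxDemand r X = maxDemand r Xᶜ) ∧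
      (∀ X Y : Finset V,
        maxDemand r X + maxDemand r Y ≤ maxDemand r (X ∩ Y) + maxDemand r (X ∪ Y) ∨
        maxDemand r X + maxDemand r Y ≤ maxDemand r (X \ Y) + maxDemand r (Y \ X)) := by
  have sym : ∀ X : Finset V, maxDemand r X ≤ maxDemand r Xᶜ := by
    intro X
    refine Finset.sup_le fun uv huv => ?_
    obtain ⟨hu, hv⟩ := Finset.mem_product.mp huv
    exact le_maxDemand' r hr hv (fun h => Finset.mem_compl.mp h hu)
  constructor
  · intro X
    refine le_antisymm (sym X) ?_
    simpa using sym Xᶜ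
  · intro X Y
    rcases (X ×ˢ Xᶜ).eq_empty_or_nonempty with hXe | hXne
    · -- maxDemand r X = 0
      have hX0 : maxDemand r X = 0 := by simp [maxDemand, hXe]
      rcases (Y ×ˢ Yᶜ).eq_empty_or_nonempty with hYe | hYne
      · have hY0 : maxDemand r Y = 0 := by simp [maxDemand, hYe]
        left; simp [hX0, hY0]
      · obtain ⟨⟨a, b⟩, hab, hY⟩ :=
          Finset.exists_mem_eq_sup _ hYne (fun uv : V × V => r uv.1 uv.2)
        obtain ⟨ha, hb⟩ := Finset.mem_product.mp hab
        rw [Finset.mem_compl] at hb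
        rw [hX0, zero_add]
        by_cases h3 : a ∈ X
        · left
          calc maxDemand r Y = r a b := hY
            _ ≤ maxDemand r (X ∩ Y) :=
              le_maxDemand r (Finset.mem_inter.mpr ⟨h3, ha⟩)
                (fun h => hb (Finset.mem_inter.mp h).2)
            _ ≤ _ := Nat.le_add_right _ _
        · right
          calc maxDemand r Y = r a b := hY
            _ ≤ maxDemand r (Y \ X) :=
              le_maxDemand r (Finset.mem_sdiff.mpr ⟨ha, h3⟩)
                (fun h => hb (Finset.mem_sdiff.mp h).1)
            _ ≤ _ := Nat.le_add_left _ _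
    rcases (Y ×ˢ Yᶜ).eq_empty_or_nonempty with hYe | hYne
    · have hY0 : maxDemand r Y = 0 := by simp [maxDemand, hYe]
      obtain ⟨⟨u, v⟩, huv, hX⟩ :=
        Finset.exists_mem_eq_sup _ hXne (fun uv : V × V => r uv.1 uv.2)
      obtain ⟨hu, hv⟩ := Finset.mem_product.mp huv
      rw [Finset.mem_compl] at hv
      rw [hY0, add_zero]
      by_cases h1 : u ∈ Y
      · left
        calc maxDemand r X = r u v := hX
          _ ≤ maxDemand r (X ∩ Y) :=
            le_maxDemand r (Finset.mem_inter.mpr ⟨hu, h1⟩)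
              (fun h => hv (Finset.mem_inter.mp h).1)
          _ ≤ _ := Nat.le_add_right _ _
      · right
        calc maxDemand r X = r u v := hX
          _ ≤ maxDemand r (X \ Y) :=
            le_maxDemand r (Finset.mem_sdiff.mpr ⟨hu, h1⟩)
              (fun h => hv (Finset.mem_sdiff.mp h).1)
          _ ≤ _ := Nat.le_add_right _ _
    -- main case: both suprema attained
    obtain ⟨⟨u, v⟩, huv, hX⟩ :=
      Finset.exists_mem_eq_sup _ hXne (fun uv : V × V => r uv.1 uv.2)
    obtain ⟨hu, hv⟩ := Finset.mem_product.mp huv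
    rw [Finset.mem_compl] at hv
    obtain ⟨⟨a, b⟩, hab, hY⟩ :=
      Finset.exists_mem_eq_sup _ hYne (fun uv : V × V => r uv.1 uv.2)
    obtain ⟨ha, hb⟩ := Finset.mem_product.mp hab
    rw [Finset.mem_compl] at hb
    have hX' : maxDemand r X = r u v := hX
    have hY' : maxDemand r Y = r a b := hY
    rw [hX', hY']
    by_cases h1 : u ∈ Y <;> by_cases h2 : v ∈ Y <;> by_cases h3 : a ∈ X <;>
      by_cases h4 : b ∈ X <;>
    first
    -- e crosses X∩Y, f crosses X∪Y
    | (refine Or.inl (add_le_add (le_maxDemand r ?_ ?_) (le_maxDemand r ?_ ?_)) <;>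
        simp_all) ; done
    -- e crosses X∪Y, f crosses X∩Y (swap the right-hand side)
    | (refine Or.inl ((add_le_add
          (le_maxDemand r ?_ ?_ : r u v ≤ maxDemand r (X ∪ Y))
          (le_maxDemand r ?_ ?_ : r a b ≤ maxDemand r (X ∩ Y))).trans
          (le_of_eq (add_comm _ _))) <;> simp_all) ; done
    -- e crosses X\Y, f crosses Y\X
    | (refine Or.inr (add_le_add (le_maxDemand r ?_ ?_) (le_maxDemand r ?_ ?_)) <;>
        simp_all) ; done
    -- e crosses Y\X (reversed), f crosses X\Y (reversed)
    | (refine Or.inr ((add_le_add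
          (le_maxDemand' r hr ?_ ?_ : r u v ≤ maxDemand r (Y \ X))
          (le_maxDemand' r hr ?_ ?_ : r a b ≤ maxDemand r (X \ Y))).trans
          (le_of_eq (add_comm _ _))) <;> simp_all) ; done
    -- special case u∈Y, v∉Y, a∉X, b∈X : r a b ≤ R(X) = r u v ≤ R(X∪Y)
    | (refine Or.inl (add_le_add
          (le_maxDemand r ?_ ?_ : r u v ≤ maxDemand r (X ∩ Y))
          (((le_maxDemand' r hr ?_ ?_).trans_eq hX').trans
            (le_maxDemand r ?_ ?_ : r u v ≤ maxDemand r (X ∪ Y)))) <;>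
        simp_all) ; done
    -- special case u∉Y, v∈Y, a∈X, b∉X : r u v ≤ R(Y) = r a b ≤ R(X∩Y)
    | (refine Or.inl (add_le_add
          (((le_maxDemand' r hr ?_ ?_).trans_eq hY').trans
            (le_maxDemand r ?_ ?_ : r a b ≤ maxDemand r (X ∩ Y)))
          (le_maxDemand r ?_ ?_ : r a b ≤ maxDemand r (X ∪ Y))) <;>
        simp_all) ; done
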